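/- For all positive integers r < k with r ≥ 2, the Turán density t(k,r) = lim_{n→∞} T(n,k,r)/C(n,r) equals s*([0,1],k,r), the infimum of λ(C) over all Lebesgue measurable symmetric covering (k−r)-insertion codes C ⊆ [0,1]^r. -/

import Mathlib

open MeasureTheory Filter Topology ENNReal

/-- `x` covers `a` if `x` is a subsequence of `a`. -/
def Covers {X : Type*} {r k : ℕ} (x : Fin r → X) (a : Fin k → X) : Prop :=
  ∃ g : Fin r → Fin k, StrictMono g ∧ ∀ i, a (g i) = x i

/-- `C ⊆ X^r` is a covering `(k-r)`-insertion code over `X`: every sequence in `X^k`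
is covered by some sequence in `C`. -/
def IsCoveringCode {X : Type*} (r k : ℕ) (C : Set (Fin r → X)) : Prop :=
  ∀ a : Fin k → X, ∃ x ∈ C, Covers x a

/-- Minimum size of a covering `(k-r)`-insertion code over the alphabet `[n]`. -/
noncomputable def covNum (n k r : ℕ) : ℕ :=
  sInf {m | ∃ C : Finset (Fin r → Fin n), IsCoveringCode r k (↑C : Set (Fin r → Fin n)) ∧ C.card = m}

/-- The unit cube `[0,1]^r`. -/
def unitCube (r : ℕ) : Set (Fin r → ℝ) := {x | ∀ i, x i ∈ Set.Icc (0 : ℝ) 1}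

/-- `C ⊆ [0,1]^r` covers `[0,1]^k`. -/
def CoversCube (r k : ℕ) (C : Set (Fin r → ℝ)) : Prop :=
  ∀ a ∈ unitCube k, ∃ x ∈ C, Covers x a

/-- Delete the `i`-th coordinate of a length `r+1` sequence. -/
def deleteAt {X : Type*} {r : ℕ} (i : Fin (r + 1)) (x : Fin (r + 1) → X) : Fin r → X :=
  x ∘ i.succAbove

/-- `extSet C i` is the set `C_i` of sequences in `X^{r+1}` whose subsequence obtained by
deleting the `i`-th coordinate belongs to `C`. -/
def extSet {X : Type*} {r : ℕ} (C : Set (Fin r → X)) (i : Fin (r + 1)) :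
    Set (Fin (r + 1) → X) :=
  {x | deleteAt i x ∈ C}

/-- A set of sequences is symmetric if it is closed under permuting the coordinates. -/
def IsSymmetric {X : Type*} {k : ℕ} (M : Set (Fin k → X)) : Prop :=
  ∀ x ∈ M, ∀ σ : Equiv.Perm (Fin k), x ∘ σ ∈ M

/-- The symmetric closure of a set of sequences. -/
def SymClosure {X : Type*} {k : ℕ} (M : Set (Fin k → X)) : Set (Fin k → X) :=
  {x | ∃ σ : Equiv.Perm (Fin k), x ∘ σ ∈ M}

/-- A Turán `(n,k,r)`-system: a family of `r`-element subsets of `[n]` such that every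
`k`-element subset of `[n]` contains a member of the family. -/
def IsTuranSystem (n k r : ℕ) (F : Finset (Finset (Fin n))) : Prop :=
  (∀ A ∈ F, A.card = r) ∧ ∀ K : Finset (Fin n), K.card = k → ∃ A ∈ F, A ⊆ K

/-- Minimum size of a Turán `(n,k,r)`-system. -/
noncomputable def turanNum (n k r : ℕ) : ℕ :=
  sInf {m | ∃ F : Finset (Finset (Fin n)), IsTuranSystem n k r F ∧ F.card = m}


noncomputable def unif : Measure ℝ := (volume : Measure ℝ).restrict (Set.Icc 0 1)

instance : IsProbabilityMeasure unif := by
  constructor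
  rw [unif, Measure.restrict_apply_univ]
  simp [Real.volume_Icc]

lemma map_comp_pi {n r : ℕ} (f : Fin r → Fin n) (hf : Function.Injective f) :
    Measure.map (fun u : Fin n → ℝ => u ∘ f) (Measure.pi fun _ : Fin n => unif)
      = Measure.pi fun _ : Fin r => unif := by
  classical
  set S := (Set.range f)ᶜ
  let e : (Fin r ⊕ S) ≃ Fin n :=
    (Equiv.sumCongr (Equiv.ofInjective f hf) (Equiv.refl _)).trans (Equiv.Set.sumCompl _)
  have h1 : MeasurePreserving (MeasurableEquiv.piCongrLeft (fun _ : Fin n => ℝ) e).symm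
      (Measure.pi fun _ : Fin n => unif) (Measure.pi fun _ : Fin r ⊕ S => unif) :=
    (measurePreserving_piCongrLeft (fun _ : Fin n => unif) e).symm _
  have h2 : MeasurePreserving (MeasurableEquiv.sumPiEquivProdPi (fun _ : Fin r ⊕ S => ℝ))
      (Measure.pi fun _ : Fin r ⊕ S => unif)
      ((Measure.pi fun _ : Fin r => unif).prod (Measure.pi fun _ : S => unif)) :=
    measurePreserving_sumPiEquivProdPi _
  have h3 : MeasurePreserving (Prod.fst : ((Fin r → ℝ) × (S → ℝ)) → (Fin r → ℝ))
      ((Measure.pi fun _ : Fin r => unif).prod (Measure.pi fun _ : S => unif))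
      (Measure.pi fun _ : Fin r => unif) := by
    refine ⟨measurable_fst, ?_⟩
    rw [Measure.map_fst_prod]
    simp
  have hcomp := (h3.comp h2).comp h1
  have hfun : (Prod.fst ∘ (⇑(MeasurableEquiv.sumPiEquivProdPi (fun _ : Fin r ⊕ S => ℝ))) ∘
      (⇑(MeasurableEquiv.piCongrLeft (fun _ : Fin n => ℝ) e).symm))
      = (fun u : Fin n → ℝ => u ∘ f) := by
    ext u i
    simp [MeasurableEquiv.sumPiEquivProdPi, MeasurableEquiv.piCongrLeft, e,
      Equiv.piCongrLeft, Equiv.piCongrLeft', Equiv.Set.sumCompl_apply_inl]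
    rw [Equiv.Set.sumCompl_apply_inl]
  rw [← hfun]
  exact hcomp.map_eq
lemma unitCube_eq (r : ℕ) : unitCube r = Set.pi Set.univ (fun _ : Fin r => Set.Icc (0:ℝ) 1) := by
  ext x; simp [unitCube, Pi.le_def, forall_and]

lemma measurableSet_unitCube (r : ℕ) : MeasurableSet (unitCube r) := by
  rw [unitCube_eq]
  exact MeasurableSet.univ_pi fun _ => measurableSet_Icc

lemma pi_unif_eq (r : ℕ) :
    (Measure.pi fun _ : Fin r => unif) = (volume : Measure (Fin r → ℝ)).restrict (unitCube r) := by
  refine Measure.pi_eq fun s hs => ?_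
  rw [unitCube_eq, Measure.restrict_apply (MeasurableSet.univ_pi hs)]
  have : (Set.pi Set.univ s) ∩ (Set.pi Set.univ fun _ : Fin r => Set.Icc (0:ℝ) 1)
      = Set.pi Set.univ (fun i => s i ∩ Set.Icc (0:ℝ) 1) := by
    ext x; simp [Set.mem_pi, forall_and, Pi.le_def]
  rw [this, volume_pi_pi]
  simp only [unif]
  refine Finset.prod_congr rfl fun i _ => ?_
  rw [Measure.restrict_apply (hs i)]

lemma pi_unif_apply {r : ℕ} {C : Set (Fin r → ℝ)} (hC : MeasurableSet C) (hsub : C ⊆ unitCube r) :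
    (Measure.pi fun _ : Fin r => unif) C = volume C := by
  rw [pi_unif_eq, Measure.restrict_apply hC, Set.inter_eq_self_of_subset_left hsub]

lemma turan_le_bound {r k : ℕ} {C : Set (Fin r → ℝ)}
    (hsub : C ⊆ unitCube r) (hC : MeasurableSet C) (hcov : CoversCube r k C) (n : ℕ) :
    (turanNum n k r : ℝ) ≤ (n.choose r : ℝ) * (volume C).toReal := by
  classical
  set μn := Measure.pi fun _ : Fin n => unif with hμn
  set v := volume C with hv
  have hcube1 : ∀ m : ℕ, (Measure.pi fun _ : Fin m => unif) (unitCube m) = 1 := by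
    intro m
    rw [unitCube_eq, Measure.pi_pi]
    simp [unif, Real.volume_Icc]
  have hv1 : v ≤ 1 := by
    calc v ≤ volume (unitCube r) := measure_mono hsub
    _ = 1 := by rw [← pi_unif_apply (measurableSet_unitCube r) subset_rfl]; exact hcube1 r
  have hvne : v ≠ ∞ := ne_top_of_le_ne_top one_ne_top hv1
  set P : Finset (Fin n) → (Fin n → ℝ) → Prop :=
    fun S u => ∃ g : Fin r → Fin n, StrictMono g ∧ (∀ i, g i ∈ S) ∧ u ∘ g ∈ C with hP
  have key : ∀ (S : Finset (Fin n)) (hS : S.card = r),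
      {u : Fin n → ℝ | P S u} = (fun u => u ∘ ⇑(S.orderEmbOfFin hS)) ⁻¹' C := by
    intro S hS
    ext u
    constructor
    · rintro ⟨g, hg1, hg2, hg3⟩
      rwa [Finset.orderEmbOfFin_unique hS hg2 hg1] at hg3
    · intro h
      exact ⟨_, (S.orderEmbOfFin hS).strictMono, fun i => S.orderEmbOfFin_mem hS i, h⟩
  have hmeas_comp : ∀ f : Fin r → Fin n, Measurable (fun u : Fin n → ℝ => u ∘ f) :=
    fun f => measurable_pi_lambda _ (fun i => measurable_pi_apply _)
  have hmeasP : ∀ (S : Finset (Fin n)) (hS : S.card = r), MeasurableSet {u : Fin n → ℝ | P S u} := by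
    intro S hS; rw [key S hS]; exact (hmeas_comp _) hC
  have hμP : ∀ (S : Finset (Fin n)) (hS : S.card = r), μn {u : Fin n → ℝ | P S u} = v := by
    intro S hS
    rw [key S hS, hμn, ← Measure.map_apply (hmeas_comp _) hC,
      map_comp_pi _ (S.orderEmbOfFin hS).injective, pi_unif_apply hC hsub]
  set F : (Fin n → ℝ) → Finset (Finset (Fin n)) :=
    fun u => (Finset.powersetCard r Finset.univ).filter (fun S => P S u) with hF
  have hTuran : ∀ u ∈ unitCube n, IsTuranSystem n k r (F u) := by
    intro u hu
    constructor
    · intro A hA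
      exact (Finset.mem_powersetCard.1 (Finset.mem_filter.1 hA).1).2
    · intro K hK
      have ha : (u ∘ ⇑(K.orderEmbOfFin hK)) ∈ unitCube k := fun i => hu _
      obtain ⟨x, hxC, g', hg'1, hg'2⟩ := hcov _ ha
      set g : Fin r → Fin n := (⇑(K.orderEmbOfFin hK)) ∘ g' with hg
      have hgmono : StrictMono g := (K.orderEmbOfFin hK).strictMono.comp hg'1
      have hugx : u ∘ g = x := funext fun i => hg'2 i
      set A : Finset (Fin n) := Finset.image g Finset.univ with hA
      have hAcard : A.card = r := by
        rw [hA, Finset.card_image_of_injective _ hgmono.injective, Finset.card_univ,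
          Fintype.card_fin]
      refine ⟨A, Finset.mem_filter.2 ⟨Finset.mem_powersetCard.2 ⟨Finset.subset_univ _, hAcard⟩,
        ⟨g, hgmono, fun i => Finset.mem_image_of_mem _ (Finset.mem_univ i), by rw [hugx]; exact hxC⟩⟩,
        ?_⟩
      intro y hy
      obtain ⟨i, _, rfl⟩ := Finset.mem_image.1 hy
      exact K.orderEmbOfFin_mem hK _
  have hcard : ∀ u : Fin n → ℝ, ((F u).card : ℝ≥0∞)
      = ∑ S ∈ Finset.powersetCard r Finset.univ,
          Set.indicator {u' : Fin n → ℝ | P S u'} (fun _ => (1:ℝ≥0∞)) u := by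
    intro u
    rw [hF]
    rw [Finset.natCast_card_filter]
    refine Finset.sum_congr rfl fun S _ => ?_
    by_cases h : P S u <;> simp [h, Set.indicator_apply]
  have hint : ∫⁻ u, ((F u).card : ℝ≥0∞) ∂μn = (n.choose r : ℝ≥0∞) * v := by
    calc ∫⁻ u, ((F u).card : ℝ≥0∞) ∂μn
        = ∑ S ∈ Finset.powersetCard r Finset.univ,
            ∫⁻ u, Set.indicator {u' : Fin n → ℝ | P S u'} (fun _ => (1:ℝ≥0∞)) u ∂μn := by
          simp_rw [hcard]
          exact lintegral_finset_sum _ (fun S hS => measurable_const.indicator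
            (hmeasP S (Finset.mem_powersetCard.1 hS).2))
      _ = ∑ S ∈ Finset.powersetCard r Finset.univ, v := by
          refine Finset.sum_congr rfl fun S hS => ?_
          rw [lintegral_indicator_const (hmeasP S (Finset.mem_powersetCard.1 hS).2) 1, one_mul]
          exact hμP S (Finset.mem_powersetCard.1 hS).2
      _ = (n.choose r : ℝ≥0∞) * v := by
          rw [Finset.sum_const, Finset.card_powersetCard, Finset.card_univ, Fintype.card_fin,
            nsmul_eq_mul]
  set b := (n.choose r : ℝ≥0∞) * v with hb
  have hbne : b ≠ ∞ := ENNReal.mul_ne_top (ENNReal.natCast_ne_top _) hvne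
  set m := Nat.floor b.toReal with hm
  have hex : ∃ u ∈ unitCube n, (F u).card ≤ m := by
    by_contra hno
    push_neg at hno
    have hpt : ∀ u : Fin n → ℝ,
        Set.indicator (unitCube n) (fun _ => ((m+1 : ℕ) : ℝ≥0∞)) u ≤ ((F u).card : ℝ≥0∞) := by
      intro u
      by_cases hu : u ∈ unitCube n
      · rw [Set.indicator_of_mem hu]
        exact_mod_cast Nat.succ_le_of_lt (hno u hu)
      · rw [Set.indicator_of_notMem hu]
        exact zero_le
    have hge : ((m+1 : ℕ) : ℝ≥0∞) * μn (unitCube n) ≤ b := by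
      rw [← lintegral_indicator_const (measurableSet_unitCube n) _, ← hint]
      exact lintegral_mono hpt
    rw [hμn, hcube1 n, mul_one] at hge
    have : b.toReal < ((m+1 : ℕ) : ℝ≥0∞).toReal := by
      rw [ENNReal.toReal_natCast]
      push_cast
      exact Nat.lt_floor_add_one _
    rw [ENNReal.toReal_lt_toReal hbne (ENNReal.natCast_ne_top _)] at this
    exact absurd hge (not_le.2 this)
  obtain ⟨u, hu, hle⟩ := hex
  have h1 : turanNum n k r ≤ (F u).card := Nat.sInf_le ⟨F u, hTuran u hu, rfl⟩
  have h2 : (turanNum n k r : ℝ) ≤ (m : ℝ) := by exact_mod_cast h1.trans hle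
  have h3 : (m : ℝ) ≤ b.toReal := Nat.floor_le ENNReal.toReal_nonneg
  have h4 : b.toReal = (n.choose r : ℝ) * (volume C).toReal := by
    rw [hb, ENNReal.toReal_mul, ENNReal.toReal_natCast, hv]
  linarith


noncomputable def jdx (n : ℕ) (hn : 0 < n) : ℝ → Fin n :=
  fun x => ⟨min (⌊x * n⌋.toNat) (n-1), lt_of_le_of_lt (min_le_right _ _) (Nat.sub_lt hn one_pos)⟩

lemma jdx_measurable (n : ℕ) (hn : 0 < n) : Measurable (jdx n hn) := by
  have h1 : Measurable fun x : ℝ => ⌊x * (n:ℝ)⌋ :=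
    Int.measurable_floor.comp (measurable_id.mul_const _)
  exact (measurable_of_countable
    (fun m : ℤ => (⟨min m.toNat (n-1), lt_of_le_of_lt (min_le_right _ _) (Nat.sub_lt hn one_pos)⟩ : Fin n))).comp h1

lemma jdx_preimage (n : ℕ) (hn : 0 < n) (v : Fin n) :
    Set.Icc (0:ℝ) 1 ∩ jdx n hn ⁻¹' {v} ⊆ Set.Icc ((v:ℝ)/n) (((v:ℝ)+1)/n) := by
  rintro x ⟨⟨hx0, hx1⟩, hxv⟩
  have hn' : (0:ℝ) < n := by exact_mod_cast hn
  have hveq : min (⌊x * n⌋.toNat) (n-1) = (v : ℕ) := congrArg Fin.val hxv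
  have h0 : (0:ℤ) ≤ ⌊x * (n:ℝ)⌋ := Int.floor_nonneg.2 (mul_nonneg hx0 hn'.le)
  by_cases hc : (v : ℕ) = n - 1
  · have h1 : n - 1 ≤ ⌊x * (n:ℝ)⌋.toNat := by
      rcases min_cases (⌊x * (n:ℝ)⌋.toNat) (n-1) with ⟨h,h'⟩|⟨h,h'⟩ <;> omega
    have h2 : ((n:ℤ) - 1) ≤ ⌊x * (n:ℝ)⌋ := by omega
    have h3 : ((n:ℝ) - 1) ≤ x * n := by exact_mod_cast (Int.le_floor.1 (by exact_mod_cast h2))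
    have hvr : ((v:ℕ):ℝ) = (n:ℝ) - 1 := by
      rw [hc]
      push_cast [Nat.cast_sub hn]
      ring
    constructor
    · rw [div_le_iff₀ hn']
      rw [hvr] at *
      linarith
    · have : ((v:ℝ)+1) = n := by rw [hvr] at *; push_cast at *; linarith
      rw [this, div_self hn'.ne']
      exact hx1
  · have h1 : ⌊x * (n:ℝ)⌋.toNat = (v:ℕ) := by
      rcases min_cases (⌊x * (n:ℝ)⌋.toNat) (n-1) with ⟨h,h'⟩|⟨h,h'⟩ <;> omega
    have h2 : ⌊x * (n:ℝ)⌋ = ((v:ℕ) : ℤ) := by omega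
    have h3 : ((v:ℕ):ℝ) ≤ x * n := by
      have := Int.le_floor.1 (le_of_eq h2.symm)
      exact_mod_cast this
    have h4 : x * n < ((v:ℕ):ℝ) + 1 := by
      have : ⌊x * (n:ℝ)⌋ < ((v:ℕ):ℤ) + 1 := by omega
      have := Int.floor_lt.1 this
      push_cast at this ⊢
      linarith
    constructor
    · rw [div_le_iff₀ hn']; exact h3
    · rw [le_div_iff₀ hn']; exact h4.le

lemma vol_jdx_le (n : ℕ) (hn : 0 < n) (v : Fin n) :
    volume (Set.Icc (0:ℝ) 1 ∩ jdx n hn ⁻¹' {v}) ≤ ENNReal.ofReal (1 / n) := by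
  calc volume (Set.Icc (0:ℝ) 1 ∩ jdx n hn ⁻¹' {v})
      ≤ volume (Set.Icc ((v:ℝ)/n) (((v:ℝ)+1)/n)) := measure_mono (jdx_preimage n hn v)
    _ = ENNReal.ofReal (((v:ℝ)+1)/n - (v:ℝ)/n) := Real.volume_Icc
    _ = ENNReal.ofReal (1 / n) := by rw [div_sub_div_same]; norm_num

lemma prod_le_sq {ι : Type*} [Fintype ι] [DecidableEq ι] (f : ι → ℝ≥0∞) (p q : ι) (hpq : p ≠ q) (c : ℝ≥0∞)
    (h1 : ∀ i, f i ≤ 1) (hp : f p ≤ c) (hq : f q ≤ c) : ∏ i, f i ≤ c^2 := by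
  rw [← Finset.mul_prod_erase Finset.univ f (Finset.mem_univ p)]
  have hq' : q ∈ Finset.univ.erase p := Finset.mem_erase.2 ⟨hpq.symm, Finset.mem_univ q⟩
  rw [← Finset.mul_prod_erase _ f hq']
  have hrest : ∏ i ∈ (Finset.univ.erase p).erase q, f i ≤ 1 :=
    Finset.prod_le_one' (fun i _ => h1 i)
  calc f p * (f q * ∏ i ∈ (Finset.univ.erase p).erase q, f i)
      ≤ c * (c * 1) := mul_le_mul' hp (mul_le_mul' hq hrest)
    _ = c^2 := by ring

lemma card_fiber_le (r n : ℕ) (A : Finset (Fin n)) (hA : A.card = r) :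
    (Finset.univ.filter (fun φ : Fin r → Fin n => Finset.image φ Finset.univ = A)).card
      ≤ r.factorial := by
  classical
  set s := Finset.univ.filter (fun φ : Fin r → Fin n => Finset.image φ Finset.univ = A) with hs
  have himg : ∀ φ ∈ s, Finset.image φ Finset.univ = A := fun φ hφ => (Finset.mem_filter.1 hφ).2
  have key : ∀ φ ∈ s, Function.Injective φ := by
    intro φ hφ
    have h1 : (Finset.image φ Finset.univ).card = (Finset.univ : Finset (Fin r)).card := by
      rw [himg φ hφ, hA, Finset.card_univ, Fintype.card_fin]
    have h2 := Finset.card_image_iff.1 h1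
    rw [Finset.coe_univ] at h2
    exact Set.injOn_univ.1 h2
  have hmem : ∀ (φ : Fin r → Fin n), φ ∈ s → ∀ i, φ i ∈ A := by
    intro φ hφ i
    rw [← himg φ hφ]
    exact Finset.mem_image_of_mem _ (Finset.mem_univ i)
  have hle : s.card ≤ Fintype.card (Fin r ↪ {y // y ∈ A}) := by
    rw [← Finset.card_attach, ← Finset.card_univ]
    refine Finset.card_le_card_of_injOn
      (fun φa => (⟨fun i => ⟨φa.1 i, hmem φa.1 φa.2 i⟩,
        fun i j hij => key φa.1 φa.2 (congrArg Subtype.val hij)⟩ : Fin r ↪ {y // y ∈ A}))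
      (fun _ _ => Finset.mem_univ _) ?_
    intro φa _ φb _ h
    apply Subtype.ext
    funext i
    have h2 := congrFun (congrArg (fun e : Fin r ↪ {y // y ∈ A} => (e : Fin r → {y // y ∈ A})) h) i
    exact congrArg Subtype.val h2
  calc s.card ≤ Fintype.card (Fin r ↪ {y // y ∈ A}) := hle
    _ = r.factorial := by
      rw [Fintype.card_embedding_eq, Fintype.card_coe, hA, Fintype.card_fin,
        Nat.descFactorial_self]

lemma image_orderEmbOfFin_univ {α : Type*} [LinearOrder α] [DecidableEq α] {m : ℕ} (T : Finset α)
    (hT : T.card = m) : Finset.image (⇑(T.orderEmbOfFin hT)) Finset.univ = T := by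
  apply Finset.eq_of_subset_of_card_le
  · intro y hy
    obtain ⟨i, _, rfl⟩ := Finset.mem_image.1 hy
    exact T.orderEmbOfFin_mem hT i
  · rw [Finset.card_image_of_injective _ (T.orderEmbOfFin hT).injective,
      Finset.card_univ, Fintype.card_fin, hT]
lemma exists_code {r k : ℕ} (hr : 2 ≤ r) (hrk : r < k) (n : ℕ) (hkn : k ≤ n) :
    ∃ C : Set (Fin r → ℝ), C ⊆ unitCube r ∧ MeasurableSet C ∧ IsSymmetric C ∧ CoversCube r k C ∧
      (volume C).toReal ≤ (r:ℝ)^2 / n + (turanNum n k r : ℝ) * (r.factorial : ℝ) / (n:ℝ)^r := by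
  classical
  have hn : 0 < n := by omega
  have hn' : (0:ℝ) < n := by exact_mod_cast hn
  have hset : {m | ∃ F : Finset (Finset (Fin n)), IsTuranSystem n k r F ∧ F.card = m}.Nonempty := by
    refine ⟨(Finset.powersetCard r Finset.univ).card, Finset.powersetCard r Finset.univ,
      ⟨?_, ?_⟩, rfl⟩
    · intro A hA; exact (Finset.mem_powersetCard.1 hA).2
    · intro K hK
      obtain ⟨A, hAK, hAr⟩ := Finset.exists_subset_card_eq (show r ≤ K.card by omega)
      exact ⟨A, Finset.mem_powersetCard.2 ⟨Finset.subset_univ _, hAr⟩, hAK⟩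
  obtain ⟨F, hF, hFcard⟩ := Nat.sInf_mem hset
  set J := jdx n hn with hJ
  set Φ : (Fin r → ℝ) → (Fin r → Fin n) := fun x i => J (x i) with hΦ
  have hΦmeas : Measurable Φ :=
    measurable_pi_lambda _ (fun i => (jdx_measurable n hn).comp (measurable_pi_apply i))
  set D : Set (Fin r → Fin n) :=
    {φ | ¬ Function.Injective φ ∨ Finset.image φ Finset.univ ∈ F} with hD
  refine ⟨unitCube r ∩ Φ ⁻¹' D, Set.inter_subset_left, ?_, ?_, ?_, ?_⟩
  · exact (measurableSet_unitCube r).inter (hΦmeas (Set.to_countable D).measurableSet)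
  · -- symmetric
    rintro x ⟨hx1, hx2⟩ σ
    refine ⟨fun i => hx1 (σ i), ?_⟩
    have hcomp : Φ (x ∘ σ) = (Φ x) ∘ σ := rfl
    rw [Set.mem_preimage, hcomp]
    rcases hx2 with h | h
    · left
      intro hinj
      have h2 : Function.Injective ((Φ x ∘ ⇑σ) ∘ ⇑σ.symm) := hinj.comp σ.symm.injective
      have h3 : (Φ x ∘ ⇑σ) ∘ ⇑σ.symm = Φ x := by funext j; simp
      rw [h3] at h2; exact h h2
    · right
      have himg : Finset.image ((Φ x) ∘ ⇑σ) Finset.univ = Finset.image (Φ x) Finset.univ := by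
        ext y
        simp only [Finset.mem_image, Finset.mem_univ, true_and, Function.comp_apply]
        constructor
        · rintro ⟨i, rfl⟩; exact ⟨σ i, rfl⟩
        · rintro ⟨i, rfl⟩; exact ⟨σ.symm i, by simp⟩
      rw [himg]; exact h
  · -- covering
    intro a ha
    set ψ : Fin k → Fin n := fun p => J (a p) with hψ
    by_cases hinj : Function.Injective ψ
    · set K := Finset.image ψ Finset.univ with hK
      have hKcard : K.card = k := by
        rw [hK, Finset.card_image_of_injective _ hinj, Finset.card_univ, Fintype.card_fin]
      obtain ⟨A, hAF, hAK⟩ := hF.2 K hKcard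
      have hAr : A.card = r := hF.1 A hAF
      set T := Finset.univ.filter (fun p : Fin k => ψ p ∈ A) with hT
      have himgT : Finset.image ψ T = A := by
        apply Finset.Subset.antisymm
        · intro y hy
          obtain ⟨p, hp, rfl⟩ := Finset.mem_image.1 hy
          exact (Finset.mem_filter.1 hp).2
        · intro y hy
          obtain ⟨p, _, rfl⟩ := Finset.mem_image.1 (hAK hy)
          exact Finset.mem_image_of_mem _ (Finset.mem_filter.2 ⟨Finset.mem_univ _, hy⟩)
      have hTcard : T.card = r := by
        rw [← hAr, ← himgT, Finset.card_image_of_injective _ hinj]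
      refine ⟨a ∘ ⇑(T.orderEmbOfFin hTcard), ⟨fun i => ha _, ?_⟩,
        ⟨⇑(T.orderEmbOfFin hTcard), (T.orderEmbOfFin hTcard).strictMono, fun i => rfl⟩⟩
      rw [Set.mem_preimage]
      right
      have h1 : Φ (a ∘ ⇑(T.orderEmbOfFin hTcard)) = ψ ∘ ⇑(T.orderEmbOfFin hTcard) := rfl
      rw [h1]
      have h2 : Finset.image (ψ ∘ ⇑(T.orderEmbOfFin hTcard)) Finset.univ
          = Finset.image ψ (Finset.image (⇑(T.orderEmbOfFin hTcard)) Finset.univ) :=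
        (Finset.image_image).symm
      rw [h2, image_orderEmbOfFin_univ T hTcard, himgT]
      exact hAF
    · rw [Function.not_injective_iff] at hinj
      obtain ⟨p, q, hpq, hne⟩ := hinj
      obtain ⟨T, hT0, -, hTcard⟩ := Finset.exists_subsuperset_card_eq
        (Finset.subset_univ ({p, q} : Finset (Fin k)))
        (le_trans (le_of_eq (Finset.card_pair hne)) hr)
        (by rw [Finset.card_univ, Fintype.card_fin]; exact hrk.le)
      refine ⟨a ∘ ⇑(T.orderEmbOfFin hTcard), ⟨fun i => ha _, ?_⟩,
        ⟨⇑(T.orderEmbOfFin hTcard), (T.orderEmbOfFin hTcard).strictMono, fun i => rfl⟩⟩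
      rw [Set.mem_preimage]
      left
      have hp' : p ∈ Finset.image (⇑(T.orderEmbOfFin hTcard)) Finset.univ := by
        rw [image_orderEmbOfFin_univ T hTcard]; exact hT0 (by simp)
      have hq' : q ∈ Finset.image (⇑(T.orderEmbOfFin hTcard)) Finset.univ := by
        rw [image_orderEmbOfFin_univ T hTcard]; exact hT0 (by simp)
      obtain ⟨i, _, hi⟩ := Finset.mem_image.1 hp'
      obtain ⟨j, _, hj⟩ := Finset.mem_image.1 hq'
      intro hinj2
      apply hne
      have heq : Φ (a ∘ ⇑(T.orderEmbOfFin hTcard)) i = Φ (a ∘ ⇑(T.orderEmbOfFin hTcard)) j := by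
        show J (a (T.orderEmbOfFin hTcard i)) = J (a (T.orderEmbOfFin hTcard j))
        rw [hi, hj]
        exact hpq
      have hij := hinj2 heq
      rw [← hi, ← hj, hij]
  · -- volume bound
    set Rep : Set (Fin r → ℝ) :=
      {x | (∀ i, x i ∈ Set.Icc (0:ℝ) 1) ∧ ¬ Function.Injective (Φ x)} with hRepDef
    set Good : Set (Fin r → ℝ) :=
      {x | (∀ i, x i ∈ Set.Icc (0:ℝ) 1) ∧ Finset.image (Φ x) Finset.univ ∈ F} with hGoodDef
    have hsplit : unitCube r ∩ Φ ⁻¹' D ⊆ Rep ∪ Good := by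
      rintro x ⟨hx1, hx2⟩
      rcases hx2 with h | h
      · exact Or.inl ⟨hx1, h⟩
      · exact Or.inr ⟨hx1, h⟩
    set ε := ENNReal.ofReal (1 / (n:ℝ)) with hε
    have hfle1 : ∀ (s : Set ℝ), volume (Set.Icc (0:ℝ) 1 ∩ s) ≤ 1 := by
      intro s
      calc volume (Set.Icc (0:ℝ) 1 ∩ s) ≤ volume (Set.Icc (0:ℝ) 1) :=
            measure_mono Set.inter_subset_left
        _ = 1 := by rw [Real.volume_Icc]; norm_num
    -- Rep bound
    have hRep : volume Rep ≤ ENNReal.ofReal ((r:ℝ)^2 / n) := by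
      set W := (Finset.univ : Finset ((Fin r × Fin r) × Fin n)).filter
        (fun w => w.1.1 ≠ w.1.2) with hW
      set Box2 : (Fin r × Fin r) × Fin n → Set (Fin r → ℝ) := fun w =>
        Set.pi Set.univ (fun i => if i = w.1.1 ∨ i = w.1.2
          then Set.Icc (0:ℝ) 1 ∩ J ⁻¹' {w.2} else Set.Icc (0:ℝ) 1) with hBox2
      have hsub : Rep ⊆ ⋃ w ∈ W, Box2 w := by
        rintro x ⟨hx1, hx2⟩
        rw [Function.not_injective_iff] at hx2
        obtain ⟨p, q, hpq, hne⟩ := hx2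
        refine Set.mem_biUnion (Finset.mem_filter.2 ⟨Finset.mem_univ _, hne⟩ :
          ((p, q), Φ x p) ∈ W) ?_
        intro i _
        by_cases hc : i = p ∨ i = q
        · simp only [hc, if_true]
          refine ⟨hx1 i, ?_⟩
          rcases hc with rfl | rfl
          · rfl
          · exact hpq.symm
        · simp only [hc, if_false]
          exact hx1 i
      have hvol : ∀ w ∈ W, volume (Box2 w) ≤ ε^2 := by
        intro w hw
        rw [hBox2, volume_pi_pi]
        refine prod_le_sq _ w.1.1 w.1.2 (Finset.mem_filter.1 hw).2 ε ?_ ?_ ?_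
        · intro i
          by_cases hc : i = w.1.1 ∨ i = w.1.2
          · simp only [hc, if_true]; exact hfle1 _
          · simp only [hc, if_false]
            rw [Real.volume_Icc]; norm_num
        · simp only [true_or, if_true]
          exact vol_jdx_le n hn w.2
        · simp only [or_true, if_true]
          exact vol_jdx_le n hn w.2
      calc volume Rep ≤ volume (⋃ w ∈ W, Box2 w) := measure_mono hsub
        _ ≤ ∑ w ∈ W, volume (Box2 w) := measure_biUnion_finset_le _ _
        _ ≤ ∑ _w ∈ W, ε^2 := Finset.sum_le_sum hvol
        _ = W.card • ε^2 := by rw [Finset.sum_const]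
        _ ≤ (r*r*n : ℕ) • ε^2 := by
            refine nsmul_le_nsmul_left ?_ ?_
            · exact zero_le
            · calc W.card ≤ (Finset.univ : Finset ((Fin r × Fin r) × Fin n)).card :=
                  Finset.card_filter_le _ _
                _ = r*r*n := by simp [Fintype.card_prod]
        _ = ENNReal.ofReal ((r:ℝ)^2 / n) := by
            rw [nsmul_eq_mul, hε, ← ENNReal.ofReal_pow (by positivity),
              ← ENNReal.ofReal_natCast, ← ENNReal.ofReal_mul (by positivity)]
            congr 1
            push_cast
            field_simp
    -- Good bound
    have hGood : volume Good
        ≤ ENNReal.ofReal ((turanNum n k r : ℝ) * (r.factorial : ℝ) / (n:ℝ)^r) := by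
      set Dg := (Finset.univ : Finset (Fin r → Fin n)).filter
        (fun φ => Finset.image φ Finset.univ ∈ F) with hDg
      set Box : (Fin r → Fin n) → Set (Fin r → ℝ) := fun φ =>
        Set.pi Set.univ (fun i => Set.Icc (0:ℝ) 1 ∩ J ⁻¹' {φ i}) with hBox
      have hsub : Good ⊆ ⋃ φ ∈ Dg, Box φ := by
        rintro x ⟨hx1, hx2⟩
        refine Set.mem_biUnion (Finset.mem_filter.2 ⟨Finset.mem_univ _, hx2⟩ : Φ x ∈ Dg) ?_
        intro i _
        exact ⟨hx1 i, rfl⟩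
      have hvol : ∀ φ ∈ Dg, volume (Box φ) ≤ ε^r := by
        intro φ _
        rw [hBox, volume_pi_pi]
        calc ∏ i, volume (Set.Icc (0:ℝ) 1 ∩ J ⁻¹' {φ i}) ≤ ∏ _i : Fin r, ε :=
              Finset.prod_le_prod' (fun i _ => vol_jdx_le n hn (φ i))
          _ = ε^r := by rw [Finset.prod_const, Finset.card_univ, Fintype.card_fin]
      have hDgcard : Dg.card ≤ turanNum n k r * r.factorial := by
        have h1 : Dg.card = ∑ A ∈ F, (Dg.filter (fun φ => Finset.image φ Finset.univ = A)).card :=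
          Finset.card_eq_sum_card_fiberwise (fun φ hφ => (Finset.mem_filter.1 hφ).2)
        have h2 : ∀ A ∈ F, (Dg.filter (fun φ => Finset.image φ Finset.univ = A)).card
            ≤ r.factorial := by
          intro A hA
          calc (Dg.filter (fun φ => Finset.image φ Finset.univ = A)).card
              ≤ ((Finset.univ : Finset (Fin r → Fin n)).filter
                  (fun φ => Finset.image φ Finset.univ = A)).card := by
                refine Finset.card_le_card ?_
                intro φ hφ
                exact Finset.mem_filter.2 ⟨Finset.mem_univ _, (Finset.mem_filter.1 hφ).2⟩
            _ ≤ r.factorial := card_fiber_le r n A (hF.1 A hA)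
        calc Dg.card = ∑ A ∈ F, (Dg.filter (fun φ => Finset.image φ Finset.univ = A)).card := h1
          _ ≤ ∑ _A ∈ F, r.factorial := Finset.sum_le_sum h2
          _ = F.card * r.factorial := by rw [Finset.sum_const, smul_eq_mul]
          _ = turanNum n k r * r.factorial := by rw [hFcard]; rfl
      calc volume Good ≤ volume (⋃ φ ∈ Dg, Box φ) := measure_mono hsub
        _ ≤ ∑ φ ∈ Dg, volume (Box φ) := measure_biUnion_finset_le _ _
        _ ≤ ∑ _φ ∈ Dg, ε^r := Finset.sum_le_sum hvol
        _ = Dg.card • ε^r := by rw [Finset.sum_const]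
        _ ≤ (turanNum n k r * r.factorial : ℕ) • ε^r := by
            refine nsmul_le_nsmul_left zero_le hDgcard
        _ = ENNReal.ofReal ((turanNum n k r : ℝ) * (r.factorial : ℝ) / (n:ℝ)^r) := by
            rw [nsmul_eq_mul, hε, ← ENNReal.ofReal_pow (by positivity),
              ← ENNReal.ofReal_natCast, ← ENNReal.ofReal_mul (by positivity)]
            congr 1
            push_cast
            field_simp
            rw [one_div, inv_pow, mul_assoc, inv_mul_cancel₀ (pow_ne_zero _ hn'.ne'), mul_one]
    have htot : volume (unitCube r ∩ Φ ⁻¹' D)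
        ≤ ENNReal.ofReal ((r:ℝ)^2 / n + (turanNum n k r : ℝ) * (r.factorial : ℝ) / (n:ℝ)^r) := by
      calc volume (unitCube r ∩ Φ ⁻¹' D) ≤ volume (Rep ∪ Good) := measure_mono hsplit
        _ ≤ volume Rep + volume Good := measure_union_le _ _
        _ ≤ ENNReal.ofReal ((r:ℝ)^2 / n)
            + ENNReal.ofReal ((turanNum n k r : ℝ) * (r.factorial : ℝ) / (n:ℝ)^r) :=
              add_le_add hRep hGood
        _ = _ := (ENNReal.ofReal_add (by positivity) (by positivity)).symm
    exact ENNReal.toReal_le_of_le_ofReal (by positivity) htot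

/-- For `2 ≤ r < k`, the Turán density `t(k,r) = lim T(n,k,r)/C(n,r)` equals
the infimum of `λ(C)` over all Lebesgue measurable symmetric covering `(k-r)`-insertion
codes `C ⊆ [0,1]^r`. -/
theorem turan_density_eq_symmetric_inf {r k : ℕ} (hr : 2 ≤ r) (hrk : r < k) (t : ℝ)
    (ht : Tendsto (fun n : ℕ => (turanNum n k r : ℝ) / (n.choose r : ℝ)) atTop (𝓝 t)) :
    t = sInf {v : ℝ | ∃ C : Set (Fin r → ℝ), C ⊆ unitCube r ∧ MeasurableSet C ∧
      IsSymmetric C ∧ CoversCube r k C ∧ (volume C).toReal = v} := by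
  classical
  set S := {v : ℝ | ∃ C : Set (Fin r → ℝ), C ⊆ unitCube r ∧ MeasurableSet C ∧
      IsSymmetric C ∧ CoversCube r k C ∧ (volume C).toReal = v} with hSdef
  have hlow : ∀ v ∈ S, t ≤ v := by
    rintro v ⟨C, hsub, hmeas, _hsym, hcov, rfl⟩
    refine le_of_tendsto ht ?_
    filter_upwards [eventually_ge_atTop r] with n hn
    have hch : (0:ℝ) < (n.choose r : ℝ) := by exact_mod_cast Nat.choose_pos hn
    rw [div_le_iff₀ hch]
    calc (turanNum n k r : ℝ) ≤ (n.choose r : ℝ) * (volume C).toReal :=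
          turan_le_bound hsub hmeas hcov n
      _ = (volume C).toReal * (n.choose r : ℝ) := mul_comm _ _
  have hb1 : Tendsto (fun n : ℕ => (r:ℝ)^2 / n) atTop (𝓝 0) :=
    tendsto_const_div_atTop_nhds_zero_nat _
  have hc : Tendsto (fun n : ℕ => ((n.choose r : ℝ) * (r.factorial : ℝ)) / (n:ℝ)^r)
      atTop (𝓝 1) := by
    have hprod : Tendsto (fun n : ℕ => ∏ i ∈ Finset.range r, (1 - (i:ℝ)/n)) atTop (𝓝 1) := by
      have h := tendsto_finset_prod (Finset.range r)
        (f := fun (i : ℕ) (n : ℕ) => 1 - (i:ℝ)/n) (a := fun _ => (1:ℝ))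
        (fun i _ => by
          simpa using tendsto_const_nhds.sub (tendsto_const_div_atTop_nhds_zero_nat (i:ℝ)))
      simpa using h
    refine Tendsto.congr' ?_ hprod
    filter_upwards [eventually_ge_atTop (max r 1)] with n hn
    have hrn : r ≤ n := le_trans (le_max_left _ _) hn
    have hn1 : 1 ≤ n := le_trans (le_max_right _ _) hn
    have hnne : (n:ℝ) ≠ 0 := by positivity
    have hd : ((n.choose r : ℝ) * (r.factorial : ℝ)) = ∏ i ∈ Finset.range r, ((n:ℝ) - i) := by
      have h1 : n.descFactorial r = n.choose r * r.factorial := by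
        rw [Nat.descFactorial_eq_factorial_mul_choose]; ring
      have h2 : ((n.descFactorial r : ℕ) : ℝ) = ∏ i ∈ Finset.range r, ((n:ℝ) - i) := by
        rw [Nat.descFactorial_eq_prod_range, Nat.cast_prod]
        refine Finset.prod_congr rfl fun i hi => ?_
        have : i ≤ n := le_trans (Nat.le_of_lt_succ (Nat.lt_succ_of_lt (Finset.mem_range.1 hi)))
          (le_trans (Nat.le_of_lt_succ (Nat.lt_succ_of_le hrn)) le_rfl)
        rw [Nat.cast_sub this]
      rw [← h2, h1]
      push_cast
      ring
    rw [hd]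
    have hpow : (n:ℝ)^r = ∏ _i ∈ Finset.range r, (n:ℝ) := by
      rw [Finset.prod_const, Finset.card_range]
    rw [hpow, ← Finset.prod_div_distrib]
    refine Finset.prod_congr rfl fun i _ => ?_
    field_simp
  have hmul : Tendsto (fun n : ℕ => (turanNum n k r : ℝ) * (r.factorial : ℝ) / (n:ℝ)^r)
      atTop (𝓝 t) := by
    have h := ht.mul hc
    rw [mul_one] at h
    refine Tendsto.congr' ?_ h
    filter_upwards [eventually_ge_atTop (max r 1)] with n hn
    have hrn : r ≤ n := le_trans (le_max_left _ _) hn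
    have hn1 : 1 ≤ n := le_trans (le_max_right _ _) hn
    have hch : (n.choose r : ℝ) ≠ 0 := by
      have := Nat.choose_pos hrn
      positivity
    have hnne : (n:ℝ) ≠ 0 := by positivity
    field_simp
  have hbt : Tendsto (fun n : ℕ => (r:ℝ)^2 / n
      + (turanNum n k r : ℝ) * (r.factorial : ℝ) / (n:ℝ)^r) atTop (𝓝 t) := by
    simpa using hb1.add hmul
  obtain ⟨C0, h01, h02, h03, h04, _h05⟩ := exists_code hr hrk k le_rfl
  have hSne : S.Nonempty := ⟨(volume C0).toReal, C0, h01, h02, h03, h04, rfl⟩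
  have hbdd : BddBelow S := ⟨t, hlow⟩
  refine le_antisymm (le_csInf hSne hlow) ?_
  refine ge_of_tendsto hbt ?_
  filter_upwards [eventually_ge_atTop k] with n hn
  obtain ⟨C, h1, h2, h3, h4, h5⟩ := exists_code hr hrk n hn
  exact le_trans (csInf_le hbdd ⟨C, h1, h2, h3, h4, rfl⟩) h5
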